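/- Let b : ℝ^d × [0,T] → ℝ^d, f : ℝ^d × [0,T] → ℝ, g : ℝ^d → ℝ be C¹, and let X : ℝ^d × [0,T] → ℝ^d solve the ODE ∂ₜX(x,t) = b(X(x,t),t), X(x,0) = x, with X C¹ in x. Let a : ℝ^d × [0,T] → ℝ^d solve the adjoint ODE ∂ₜa(x,t) = −∇ₓb(X(x,t),t) a(x,t) − ∇ₓf(X(x,t),t), a(x,T) = ∇g(X(x,T)). Then ∇ₓ[∫₀ᵀ f(X(x,t),t) dt + g(X(x,T))] = a(x,0). -/

import Mathlib

open Matrix intervalIntegral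

namespace Stmt17Aux

variable {d : ℕ}

lemma abs_dot_le (u v : Fin d → ℝ) : |u ⬝ᵥ v| ≤ (d : ℝ) * ‖u‖ * ‖v‖ := by
  calc |u ⬝ᵥ v| ≤ ∑ i, |u i * v i| := Finset.abs_sum_le_sum_abs _ _
    _ ≤ ∑ _i : Fin d, ‖u‖ * ‖v‖ := by
        refine Finset.sum_le_sum fun i _ => ?_
        rw [abs_mul]
        have h1 : |u i| ≤ ‖u‖ := by
          simpa [Real.norm_eq_abs] using norm_le_pi_norm u i
        have h2 : |v i| ≤ ‖v‖ := by
          simpa [Real.norm_eq_abs] using norm_le_pi_norm v i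
        exact mul_le_mul h1 h2 (abs_nonneg _) (norm_nonneg _)
    _ = (d : ℝ) * ‖u‖ * ‖v‖ := by simp [mul_assoc]

lemma norm_mulVec_le (M : Fin d → Fin d → ℝ) (v : Fin d → ℝ) :
    ‖(Matrix.of M).mulVec v‖ ≤ (d : ℝ) * ‖M‖ * ‖v‖ := by
  have h0 : (0:ℝ) ≤ (d : ℝ) * ‖M‖ * ‖v‖ := by positivity
  rw [pi_norm_le_iff_of_nonneg h0]
  intro i
  calc ‖(Matrix.of M).mulVec v i‖ = |M i ⬝ᵥ v| := rfl
    _ ≤ (d : ℝ) * ‖M i‖ * ‖v‖ := abs_dot_le _ _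
    _ ≤ (d : ℝ) * ‖M‖ * ‖v‖ := by
        have := norm_le_pi_norm M i
        have h3 : (0:ℝ) ≤ (d:ℝ) := by positivity
        have := mul_le_mul_of_nonneg_left this h3
        exact mul_le_mul_of_nonneg_right this (norm_nonneg _)

noncomputable def dotCLM (u : Fin d → ℝ) : (Fin d → ℝ) →L[ℝ] ℝ :=
  LinearMap.toContinuousLinearMap
    { toFun := fun v => u ⬝ᵥ v
      map_add' := fun v w => dotProduct_add u v w
      map_smul' := fun c v => by simp [dotProduct_smul] }

@[simp] lemma dotCLM_apply (u v : Fin d → ℝ) : dotCLM u v = u ⬝ᵥ v := rfl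

noncomputable def mulCLM (M : Fin d → Fin d → ℝ) : (Fin d → ℝ) →L[ℝ] (Fin d → ℝ) :=
  LinearMap.toContinuousLinearMap (Matrix.of M).mulVecLin

@[simp] lemma mulCLM_apply (M : Fin d → Fin d → ℝ) (v : Fin d → ℝ) :
    mulCLM M v = (Matrix.of M).mulVec v := rfl

lemma dotCLM_sub_norm_le (u u' : Fin d → ℝ) :
    ‖dotCLM u - dotCLM u'‖ ≤ (d : ℝ) * ‖u - u'‖ := by
  refine ContinuousLinearMap.opNorm_le_bound _ (by positivity) fun w => ?_
  have h : (dotCLM u - dotCLM u') w = (u - u') ⬝ᵥ w := by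
    simp [sub_dotProduct]
  rw [h]
  simpa using abs_dot_le (u - u') w

lemma mulCLM_sub_norm_le (M M' : Fin d → Fin d → ℝ) :
    ‖mulCLM M - mulCLM M'‖ ≤ (d : ℝ) * ‖M - M'‖ := by
  refine ContinuousLinearMap.opNorm_le_bound _ (by positivity) fun w => ?_
  have h : (mulCLM M - mulCLM M') w = (Matrix.of (M - M')).mulVec w := by
    simp only [ContinuousLinearMap.sub_apply, mulCLM_apply]
    funext i
    simp [Matrix.mulVec, dotProduct, Finset.sum_sub_distrib, sub_mul]
  rw [h]
  exact norm_mulVec_le _ _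

lemma mulCLM_norm_le (M : Fin d → Fin d → ℝ) : ‖mulCLM M‖ ≤ (d : ℝ) * ‖M‖ := by
  refine ContinuousLinearMap.opNorm_le_bound _ (by positivity) fun w => ?_
  exact norm_mulVec_le _ _

/-- uniform modulus of continuity on a compact product -/
lemma unif_mod {E' F' : Type*} [PseudoMetricSpace E'] [PseudoMetricSpace F']
    {K : Set E'} {I : Set ℝ} (hK : IsCompact K) (hI : IsCompact I)
    {F : E' × ℝ → F'} (hF : Continuous F) {ε : ℝ} (hε : 0 < ε) :
    ∃ η > 0, ∀ t ∈ I, ∀ z₁ ∈ K, ∀ z₂ ∈ K, dist z₁ z₂ ≤ η →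
      dist (F (z₁, t)) (F (z₂, t)) ≤ ε := by
  have huc := (hK.prod hI).uniformContinuousOn_of_continuous hF.continuousOn
  rw [Metric.uniformContinuousOn_iff] at huc
  obtain ⟨δ, hδ, h⟩ := huc ε hε
  refine ⟨δ / 2, by positivity, fun t ht z₁ h₁ z₂ h₂ hd => ?_⟩
  refine le_of_lt (h (z₁, t) ⟨h₁, ht⟩ (z₂, t) ⟨h₂, ht⟩ ?_)
  rw [Prod.dist_eq]
  simp only [dist_self]
  calc max (dist z₁ z₂) 0 = dist z₁ z₂ := max_eq_left dist_nonneg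
    _ ≤ δ / 2 := hd
    _ < δ := by linarith

/-- derivative of a dot product of two curves -/
lemma hasDerivAt_dot {u w : ℝ → Fin d → ℝ} {u' w' : Fin d → ℝ} {t : ℝ}
    (hu : HasDerivAt u u' t) (hw : HasDerivAt w w' t) :
    HasDerivAt (fun τ => u τ ⬝ᵥ w τ) (u' ⬝ᵥ w t + u t ⬝ᵥ w') t := by
  have comp : ∀ i ∈ (Finset.univ : Finset (Fin d)),
      HasDerivAt (fun τ => u τ i * w τ i) (u' i * w t i + u t i * w' i) t :=
    fun i _ => (hasDerivAt_pi.1 hu i).mul (hasDerivAt_pi.1 hw i)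
  have h := HasDerivAt.fun_sum comp
  exact h.congr_deriv (by rw [Finset.sum_add_distrib]; rfl)

lemma cont_dot {u w : ℝ → Fin d → ℝ} (hu : Continuous u) (hw : Continuous w) :
    Continuous fun t => u t ⬝ᵥ w t := by
  simp only [dotProduct]
  exact continuous_finset_sum _ fun i _ =>
    ((continuous_apply i).comp hu).mul ((continuous_apply i).comp hw)

lemma cont_mulVec {M : ℝ → Fin d → Fin d → ℝ} {w : ℝ → Fin d → ℝ}
    (hM : Continuous M) (hw : Continuous w) :
    Continuous fun t => (Matrix.of (M t)).mulVec (w t) := by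
  refine continuous_pi fun i => ?_
  exact cont_dot ((continuous_apply i).comp hM) hw

end Stmt17Aux

open Stmt17Aux Set

/-- Deterministic adjoint method: if `X(x,·)` solves `Ẋ = b(X,t)`, `X(x,0) = x`, and the
adjoint state `a(x,·)` solves `ȧ = −(∂b/∂x)ᵀa − ∇ₓf` backwards from `a(x,T) = ∇g(X(x,T))`,
then `∇ₓ[∫₀ᵀ f(X(x,t),t) dt + g(X(x,T))] = a(x,0)`.  Here `Jb y t` is the Jacobian of
`b(·,t)` at `y`, and `gf y t`, `gg y` are the gradients of `f(·,t)` and `g`. -/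
theorem stmt_17 {d : ℕ} (T : ℝ) (hT : 0 < T)
    (b : (Fin d → ℝ) → ℝ → Fin d → ℝ) (Jb : (Fin d → ℝ) → ℝ → Matrix (Fin d) (Fin d) ℝ)
    (hb : Continuous fun p : (Fin d → ℝ) × ℝ => b p.1 p.2)
    (hJb : Continuous fun p : (Fin d → ℝ) × ℝ => Jb p.1 p.2)
    (hbd : ∀ (y : Fin d → ℝ) (t : ℝ), ∃ L : (Fin d → ℝ) →L[ℝ] (Fin d → ℝ),
      HasFDerivAt (fun y' => b y' t) L y ∧ ∀ v, L v = (Jb y t).mulVec v)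
    (f : (Fin d → ℝ) → ℝ → ℝ) (gf : (Fin d → ℝ) → ℝ → Fin d → ℝ)
    (hf : Continuous fun p : (Fin d → ℝ) × ℝ => f p.1 p.2)
    (hgf : Continuous fun p : (Fin d → ℝ) × ℝ => gf p.1 p.2)
    (hfd : ∀ (y : Fin d → ℝ) (t : ℝ), ∃ L : (Fin d → ℝ) →L[ℝ] ℝ,
      HasFDerivAt (fun y' => f y' t) L y ∧ ∀ v, L v = gf y t ⬝ᵥ v)
    (g : (Fin d → ℝ) → ℝ) (gg : (Fin d → ℝ) → Fin d → ℝ)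
    (hgd : ∀ y : Fin d → ℝ, ∃ L : (Fin d → ℝ) →L[ℝ] ℝ,
      HasFDerivAt g L y ∧ ∀ v, L v = gg y ⬝ᵥ v)
    -- the flow of the ODE Ẋ = b(X,t), C¹ in the initial condition x
    (X : (Fin d → ℝ) → ℝ → Fin d → ℝ)
    (hX0 : ∀ x, X x 0 = x)
    (hXode : ∀ x t, HasDerivAt (fun τ => X x τ) (b (X x t) t) t)
    (hXdiff : ∀ t, Differentiable ℝ fun x => X x t)
    -- the adjoint state
    (a : (Fin d → ℝ) → ℝ → Fin d → ℝ)
    (haT : ∀ x, a x T = gg (X x T))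
    (haode : ∀ x t, HasDerivAt (fun τ => a x τ)
      (-((Jb (X x t) t)ᵀ.mulVec (a x t)) - gf (X x t) t) t) :
    ∀ x : Fin d → ℝ, ∃ L : (Fin d → ℝ) →L[ℝ] ℝ,
      HasFDerivAt (fun x' => (∫ t in (0:ℝ)..T, f (X x' t) t) + g (X x' T)) L x
      ∧ ∀ v, L v = a x 0 ⬝ᵥ v := by
  classical
  intro x
  refine ⟨Stmt17Aux.dotCLM (a x 0), ?_, fun v => rfl⟩
  -- basic continuity facts
  have cX : ∀ x', Continuous fun t => X x' t := fun x' =>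
    continuous_iff_continuousAt.2 fun t => (hXode x' t).continuousAt
  have ca : Continuous fun t => a x t :=
    continuous_iff_continuousAt.2 fun t => (haode x t).continuousAt
  have cXp : ∀ x', Continuous fun t => (X x' t, t) := fun x' =>
    (cX x').prodMk continuous_id
  -- bound on base trajectory
  obtain ⟨Mx0, hMx0⟩ := isCompact_Icc.exists_bound_of_continuousOn
    (f := fun t => X x t) (s := Icc (0:ℝ) T) (cX x).continuousOn
  set Mx : ℝ := max Mx0 0 with hMxdef
  have hMx : ∀ t ∈ Icc (0:ℝ) T, ‖X x t‖ ≤ Mx := fun t ht =>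
    le_trans (hMx0 t ht) (le_max_left _ _)
  have hMxnn : (0:ℝ) ≤ Mx := le_max_right _ _
  set R : ℝ := Mx + 2 with hRdef
  set K : Set (Fin d → ℝ) := Metric.closedBall 0 R with hKdef
  have hKcomp : IsCompact K := isCompact_closedBall _ _
  have hKconv : Convex ℝ K := convex_closedBall _ _
  have hXK : ∀ t ∈ Icc (0:ℝ) T, X x t ∈ K := fun t ht => by
    rw [hKdef, mem_closedBall_zero_iff]
    have := hMx t ht
    rw [hRdef]; linarith
  -- continuity of Jb as Pi-valued map
  have hJbC : Continuous fun p : (Fin d → ℝ) × ℝ =>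
      (fun i j => Jb p.1 p.2 i j : Fin d → Fin d → ℝ) :=
    continuous_pi fun i => continuous_pi fun j =>
      (continuous_apply j).comp ((continuous_apply i).comp hJb)
  obtain ⟨MB0, hMB0⟩ := (hKcomp.prod isCompact_Icc).exists_bound_of_continuousOn
    hJbC.continuousOn
  set MB : ℝ := max MB0 0 with hMBdef
  have hMB : ∀ y ∈ K, ∀ t ∈ Icc (0:ℝ) T,
      ‖(fun i j => Jb y t i j : Fin d → Fin d → ℝ)‖ ≤ MB := fun y hy t ht =>
    le_trans (hMB0 (y, t) ⟨hy, ht⟩) (le_max_left _ _)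
  have hMBnn : (0:ℝ) ≤ MB := le_max_right _ _
  set Lb : ℝ := d * MB with hLbdef
  have hLb0 : (0:ℝ) ≤ Lb := mul_nonneg (Nat.cast_nonneg _) hMBnn
  set nL : NNReal := Real.toNNReal Lb with hnLdef
  have hnL : (nL : ℝ) = Lb := Real.coe_toNNReal _ hLb0
  -- CLM forms of the derivatives of b and f
  have hbCLM : ∀ (z : Fin d → ℝ) (s : ℝ),
      HasFDerivAt (fun y' => b y' s) (mulCLM (fun i j => Jb z s i j)) z := by
    intro z s
    obtain ⟨L, hL, hLv⟩ := hbd z s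
    have hLe : L = mulCLM (fun i j => Jb z s i j) :=
      ContinuousLinearMap.ext fun v => by rw [hLv]; rfl
    rwa [hLe] at hL
  have hfCLM : ∀ (z : Fin d → ℝ) (s : ℝ),
      HasFDerivAt (fun y' => f y' s) (dotCLM (gf z s)) z := by
    intro z s
    obtain ⟨L, hL, hLv⟩ := hfd z s
    have hLe : L = dotCLM (gf z s) := ContinuousLinearMap.ext fun v => by rw [hLv]; rfl
    rwa [hLe] at hL
  -- Lipschitz bound for b on K
  have hlip : ∀ s ∈ Icc (0:ℝ) T, LipschitzOnWith nL (fun y => b y s) K := by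
    intro s hs
    refine hKconv.lipschitzOnWith_of_nnnorm_hasFDerivWithin_le
      (f' := fun z => mulCLM (fun i j => Jb z s i j))
      (fun z _hz => (hbCLM z s).hasFDerivWithinAt) (fun z hz => ?_)
    rw [← NNReal.coe_le_coe, coe_nnnorm, hnL]
    refine le_trans (mulCLM_norm_le _) ?_
    rw [hLbdef]
    exact mul_le_mul_of_nonneg_left (hMB z hz s hs) (Nat.cast_nonneg _)
  -- time clamp
  set tc : ℝ → ℝ := fun s => max 0 (min s T) with htcdef
  have htcI : ∀ s, tc s ∈ Icc (0:ℝ) T := fun s =>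
    ⟨le_max_left _ _, max_le hT.le (min_le_right _ _)⟩
  have htc_eq : ∀ s ∈ Ico (0:ℝ) T, tc s = s := fun s hs => by
    rw [htcdef]; simp only []
    rw [min_eq_left hs.2.le, max_eq_right hs.1]
  have hlip' : ∀ s : ℝ, LipschitzOnWith nL (fun y => b y (tc s)) K := fun s =>
    hlip (tc s) (htcI s)
  -- Grönwall on an interval where the perturbed trajectory stays in K
  have gron_on : ∀ x' : Fin d → ℝ, ∀ τ ∈ Icc (0:ℝ) T,
      (∀ s ∈ Icc (0:ℝ) τ, X x' s ∈ K) →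
      ∀ t ∈ Icc (0:ℝ) τ, dist (X x' t) (X x t) ≤ dist x' x * Real.exp (Lb * t) := by
    intro x' τ hτ hmem t ht
    have hres := dist_le_of_trajectories_ODE_of_mem
      (v := fun s y => b y (tc s)) (s := fun _ => K) (K := nL)
      (f := fun t => X x' t) (g := fun t => X x t) (a := 0) (b := τ) (δ := dist x' x)
      (fun s _ => hlip' s)
      (cX x').continuousOn
      (fun s hs => by
        have he : tc s = s := htc_eq s (Ico_subset_Ico_right hτ.2 hs)
        simpa [he] using (hXode x' s).hasDerivWithinAt)
      (fun s hs => hmem s (Ico_subset_Icc_self hs))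
      (cX x).continuousOn
      (fun s hs => by
        have he : tc s = s := htc_eq s (Ico_subset_Ico_right hτ.2 hs)
        simpa [he] using (hXode x s).hasDerivWithinAt)
      (fun s hs => hXK s (Icc_subset_Icc_right hτ.2 (Ico_subset_Icc_self hs)))
      (by simp [hX0])
      t ht
    simpa [hnL, sub_zero] using hres
  set δ0 : ℝ := min (1/2) ((1/2) * Real.exp (-(Lb*T))) with hδ0def
  have hδ0pos : 0 < δ0 := lt_min (by norm_num) (by positivity)
  have hδ0half : δ0 ≤ 1/2 := min_le_left _ _
  have hδ0exp : δ0 * Real.exp (Lb*T) ≤ 1/2 := by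
    have h1 : δ0 ≤ (1/2) * Real.exp (-(Lb*T)) := min_le_right _ _
    calc δ0 * Real.exp (Lb*T) ≤ (1/2) * Real.exp (-(Lb*T)) * Real.exp (Lb*T) :=
          mul_le_mul_of_nonneg_right h1 (Real.exp_nonneg _)
      _ = 1/2 := by rw [mul_assoc, ← Real.exp_add]; simp
  have stay : ∀ x', dist x' x ≤ δ0 → ∀ t ∈ Icc (0:ℝ) T, X x' t ∈ K := by
    intro x' hx'
    have hx'K : x' ∈ K := by
      rw [hKdef, mem_closedBall_zero_iff]
      have h1 : ‖x'‖ ≤ ‖x‖ + ‖x' - x‖ := by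
        calc ‖x'‖ = ‖x + (x' - x)‖ := by ring_nf
          _ ≤ ‖x‖ + ‖x' - x‖ := norm_add_le _ _
      have h2 : ‖x‖ ≤ Mx := by have := hMx 0 ⟨le_rfl, hT.le⟩; rwa [hX0] at this
      have h3 : ‖x' - x‖ ≤ δ0 := by rwa [← dist_eq_norm]
      rw [hRdef]; linarith
    set A : Set ℝ := {τ | τ ∈ Icc (0:ℝ) T ∧ ∀ s ∈ Icc (0:ℝ) τ, X x' s ∈ K} with hAdef
    have h0A : (0:ℝ) ∈ A := by
      refine ⟨⟨le_rfl, hT.le⟩, fun s hs => ?_⟩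
      have hs0 : s = 0 := le_antisymm hs.2 hs.1
      rw [hs0, hX0]; exact hx'K
    have hbdd : BddAbove A := ⟨T, fun τ hτ => hτ.1.2⟩
    have hAne : A.Nonempty := ⟨0, h0A⟩
    set τs : ℝ := sSup A with hτsdef
    have hτs0 : 0 ≤ τs := le_csSup hbdd h0A
    have hτsT : τs ≤ T := csSup_le hAne fun τ hτ => hτ.1.2
    have hmemlt : ∀ s : ℝ, 0 ≤ s → s < τs → X x' s ∈ K := by
      intro s hs0 hsτ
      obtain ⟨τ, hτA, hsτ'⟩ := exists_lt_of_lt_csSup hAne hsτ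
      exact hτA.2 s ⟨hs0, hsτ'.le⟩
    have hτsA : τs ∈ A := by
      refine ⟨⟨hτs0, hτsT⟩, fun s hs => ?_⟩
      rcases eq_or_lt_of_le hs.2 with h | h
      · rcases eq_or_lt_of_le hτs0 with h0 | h0
        · rw [h, ← h0, hX0]; exact hx'K
        · have htend : Filter.Tendsto (fun s => X x' s) (nhdsWithin τs (Iio τs))
              (nhds (X x' τs)) := ((cX x').tendsto τs).mono_left nhdsWithin_le_nhds
          have hcl : X x' τs ∈ K := by
            rw [hKdef]
            refine (Metric.isClosed_closedBall).mem_of_tendsto htend ?_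
            filter_upwards [Ioo_mem_nhdsLT_of_mem (⟨h0, le_rfl⟩ : τs ∈ Ioc 0 τs)] with u hu
            have := hmemlt u hu.1.le hu.2
            rwa [hKdef] at this
          rw [h]; exact hcl
      · exact hmemlt s hs.1 h
    have hτsT' : τs = T := by
      by_contra hne
      have hlt : τs < T := lt_of_le_of_ne hτsT hne
      have hbound := gron_on x' τs ⟨hτs0, hτsT⟩ hτsA.2
      have hmargin : ∀ s ∈ Icc (0:ℝ) τs, ‖X x' s‖ ≤ Mx + 1/2 := by
        intro s hs
        have h1 := hbound s hs
        have h2 : dist x' x * Real.exp (Lb * s) ≤ δ0 * Real.exp (Lb*T) := by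
          refine mul_le_mul hx' (Real.exp_le_exp.2 ?_) (Real.exp_nonneg _) hδ0pos.le
          exact mul_le_mul_of_nonneg_left (le_trans hs.2 hτsT) hLb0
        have h3 : dist (X x' s) (X x s) ≤ 1/2 := le_trans h1 (le_trans h2 hδ0exp)
        have h4 : ‖X x s‖ ≤ Mx := hMx s ⟨hs.1, le_trans hs.2 hτsT⟩
        have h5 : ‖X x' s‖ ≤ ‖X x s‖ + dist (X x' s) (X x s) := by
          rw [dist_eq_norm]
          calc ‖X x' s‖ = ‖X x s + (X x' s - X x s)‖ := by ring_nf
            _ ≤ ‖X x s‖ + ‖X x' s - X x s‖ := norm_add_le _ _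
        linarith
      obtain ⟨εc, hεc, hc⟩ := Metric.continuousAt_iff.1 ((cX x').continuousAt (x := τs)) 1 one_pos
      set τ' : ℝ := min T (τs + εc/2) with hτ'def
      have hτ'A : τ' ∈ A := by
        refine ⟨⟨le_min hT.le (by linarith), min_le_left _ _⟩, fun s hs => ?_⟩
        rcases le_or_gt s τs with h | h
        · exact hτsA.2 s ⟨hs.1, h⟩
        · have hd : dist s τs < εc := by
            rw [Real.dist_eq, abs_of_pos (sub_pos.2 h)]
            have h6 : s ≤ τs + εc/2 := le_trans hs.2 (min_le_right _ _)
            linarith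
          have h5 := hc hd
          have h6 : ‖X x' τs‖ ≤ Mx + 1/2 := hmargin τs ⟨hτs0, le_rfl⟩
          rw [hKdef, mem_closedBall_zero_iff]
          have h7 : ‖X x' s‖ ≤ ‖X x' τs‖ + dist (X x' s) (X x' τs) := by
            rw [dist_eq_norm]
            calc ‖X x' s‖ = ‖X x' τs + (X x' s - X x' τs)‖ := by ring_nf
              _ ≤ ‖X x' τs‖ + ‖X x' s - X x' τs‖ := norm_add_le _ _
          rw [hRdef]; linarith
      have hle : τ' ≤ τs := le_csSup hbdd hτ'A
      have hgt : τs < τ' := lt_min hlt (by linarith)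
      linarith
    intro t ht
    exact hτsA.2 t (by rw [hτsT']; exact ht)
  set Cst : ℝ := Real.exp (Lb * T) with hCstdef
  have hCstpos : 0 < Cst := Real.exp_pos _
  have grw : ∀ x', dist x' x ≤ δ0 → ∀ t ∈ Icc (0:ℝ) T,
      dist (X x' t) (X x t) ≤ dist x' x * Cst := by
    intro x' hx' t ht
    refine le_trans (gron_on x' T ⟨hT.le, le_rfl⟩ (stay x' hx') t ht) ?_
    rw [hCstdef]
    exact mul_le_mul_of_nonneg_left
      (Real.exp_le_exp.2 (mul_le_mul_of_nonneg_left ht.2 hLb0)) dist_nonneg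
  obtain ⟨Am0, hAm0⟩ := isCompact_Icc.exists_bound_of_continuousOn
    (f := fun t => a x t) (s := Icc (0:ℝ) T) ca.continuousOn
  set A0 : ℝ := max Am0 0 with hA0def
  have hA0 : ∀ t ∈ Icc (0:ℝ) T, ‖a x t‖ ≤ A0 := fun t ht =>
    le_trans (hAm0 t ht) (le_max_left _ _)
  have hA0nn : (0:ℝ) ≤ A0 := le_max_right _ _
  have cfx : ∀ x', Continuous fun t => f (X x' t) t := fun x' => hf.comp (cXp x')
  have cbx : ∀ x', Continuous fun t => b (X x' t) t := fun x' => hb.comp (cXp x')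
  have cgfx : Continuous fun t => gf (X x t) t := hgf.comp (cXp x)
  have cJbx : Continuous fun t => (fun i j => Jb (X x t) t i j : Fin d → Fin d → ℝ) :=
    hJbC.comp (cXp x)
  have key : ∀ x', ((∫ t in (0:ℝ)..T, f (X x' t) t) + g (X x' T))
      - ((∫ t in (0:ℝ)..T, f (X x t) t) + g (X x T)) - a x 0 ⬝ᵥ (x' - x)
    = (∫ t in (0:ℝ)..T,
        ((f (X x' t) t - f (X x t) t - gf (X x t) t ⬝ᵥ (X x' t - X x t))
          + a x t ⬝ᵥ (b (X x' t) t - b (X x t) t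
              - (Jb (X x t) t).mulVec (X x' t - X x t))))
      + (g (X x' T) - g (X x T) - gg (X x T) ⬝ᵥ (X x' T - X x T)) := by
    intro x'
    have hψ : ∀ t : ℝ, HasDerivAt (fun τ => a x τ ⬝ᵥ (X x' τ - X x τ))
        ((-((Jb (X x t) t)ᵀ.mulVec (a x t)) - gf (X x t) t) ⬝ᵥ (X x' t - X x t)
          + a x t ⬝ᵥ (b (X x' t) t - b (X x t) t)) t :=
      fun t => hasDerivAt_dot (haode x t) ((hXode x' t).sub (hXode x t))
    have cψ' : Continuous fun t =>
        (-((Jb (X x t) t)ᵀ.mulVec (a x t)) - gf (X x t) t) ⬝ᵥ (X x' t - X x t)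
          + a x t ⬝ᵥ (b (X x' t) t - b (X x t) t) := by
      refine Continuous.add (cont_dot (Continuous.sub (Continuous.neg ?_) cgfx)
        ((cX x').sub (cX x))) (cont_dot ca ((cbx x').sub (cbx x)))
      exact cont_mulVec (M := fun t => fun i j => Jb (X x t) t j i)
        (continuous_pi fun i => continuous_pi fun j =>
          (continuous_apply i).comp ((continuous_apply j).comp cJbx)) ca
    have hFTC : (∫ t in (0:ℝ)..T,
        ((-((Jb (X x t) t)ᵀ.mulVec (a x t)) - gf (X x t) t) ⬝ᵥ (X x' t - X x t)
          + a x t ⬝ᵥ (b (X x' t) t - b (X x t) t)))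
        = a x T ⬝ᵥ (X x' T - X x T) - a x 0 ⬝ᵥ (X x' 0 - X x 0) :=
      integral_eq_sub_of_hasDerivAt (fun t _ => hψ t) (cψ'.intervalIntegrable _ _)
    have i1 : IntervalIntegrable (fun t => f (X x' t) t - f (X x t) t)
        MeasureTheory.volume 0 T := (((cfx x').sub (cfx x))).intervalIntegrable _ _
    have i2 : IntervalIntegrable (fun t =>
        (-((Jb (X x t) t)ᵀ.mulVec (a x t)) - gf (X x t) t) ⬝ᵥ (X x' t - X x t)
          + a x t ⬝ᵥ (b (X x' t) t - b (X x t) t)) MeasureTheory.volume 0 T :=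
      cψ'.intervalIntegrable _ _
    have hsplit : (∫ t in (0:ℝ)..T,
        ((f (X x' t) t - f (X x t) t - gf (X x t) t ⬝ᵥ (X x' t - X x t))
          + a x t ⬝ᵥ (b (X x' t) t - b (X x t) t - (Jb (X x t) t).mulVec (X x' t - X x t))))
        = (∫ t in (0:ℝ)..T, (f (X x' t) t - f (X x t) t))
          + ∫ t in (0:ℝ)..T,
            ((-((Jb (X x t) t)ᵀ.mulVec (a x t)) - gf (X x t) t) ⬝ᵥ (X x' t - X x t)
              + a x t ⬝ᵥ (b (X x' t) t - b (X x t) t)) := by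
      rw [← integral_add i1 i2]
      apply integral_congr
      intro t _ht
      have hswap : a x t ⬝ᵥ ((Jb (X x t) t).mulVec (X x' t - X x t))
          = ((Jb (X x t) t)ᵀ.mulVec (a x t)) ⬝ᵥ (X x' t - X x t) := by
        rw [Matrix.mulVec_transpose, Matrix.dotProduct_mulVec]
      simp only [Matrix.mulVec_sub, dotProduct_sub, sub_dotProduct, neg_dotProduct] at hswap ⊢
      linarith [hswap]
    have hfsplit : (∫ t in (0:ℝ)..T, (f (X x' t) t - f (X x t) t))
        = (∫ t in (0:ℝ)..T, f (X x' t) t) - ∫ t in (0:ℝ)..T, f (X x t) t :=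
      integral_sub ((cfx x').intervalIntegrable _ _) ((cfx x).intervalIntegrable _ _)
    rw [hsplit, hfsplit, hFTC, hX0, hX0, haT]
    ring
  refine HasFDerivAt.of_isLittleO ?_
  rw [Asymptotics.isLittleO_iff]
  intro c hc
  set D : ℝ := Cst * ((1 + d * A0) * T + 1) with hDdef
  have hfac : (0:ℝ) < (1 + d * A0) * T + 1 := by
    have h1 : (0:ℝ) ≤ (1 + d * A0) * T := mul_nonneg (by positivity) hT.le
    linarith
  have hD : 0 < D := mul_pos hCstpos hfac
  set ε : ℝ := c / D with hεdef
  have hε : 0 < ε := div_pos hc hD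
  have hεd : 0 < ε / ((d:ℝ)+1) := by positivity
  obtain ⟨ηf, hηf, hmodf⟩ := unif_mod (F := fun p : (Fin d → ℝ) × ℝ => gf p.1 p.2)
    hKcomp isCompact_Icc hgf hεd
  obtain ⟨ηb, hηb, hmodb⟩ := unif_mod
    (F := fun p : (Fin d → ℝ) × ℝ => (fun i j => Jb p.1 p.2 i j : Fin d → Fin d → ℝ))
    hKcomp isCompact_Icc hJbC hεd
  obtain ⟨Lg, hLg, hLgv⟩ := hgd (X x T)
  have hgo := hLg.isLittleO
  rw [Asymptotics.isLittleO_iff] at hgo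
  have hev := hgo hε
  rw [Metric.eventually_nhds_iff] at hev
  obtain ⟨ηg, hηg, hg'⟩ := hev
  set m : ℝ := min (min 1 ηf) (min ηb ηg) with hmdef
  have hm : 0 < m := lt_min (lt_min one_pos hηf) (lt_min hηb hηg)
  set δ : ℝ := min δ0 (m / (2 * Cst)) with hδdef
  have hδpos : 0 < δ := lt_min hδ0pos (by positivity)
  rw [Metric.eventually_nhds_iff]
  refine ⟨δ, hδpos, fun x' hx'd => ?_⟩
  have hdle : dist x' x ≤ δ0 := le_trans hx'd.le (min_le_left _ _)
  set r : ℝ := Cst * dist x' x with hrdef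
  have hrnn : 0 ≤ r := mul_nonneg hCstpos.le dist_nonneg
  have hrm : r < m := by
    have h1 : dist x' x < m / (2 * Cst) := lt_of_lt_of_le hx'd (min_le_right _ _)
    have h2 : r < Cst * (m / (2 * Cst)) := by
      exact mul_lt_mul_of_pos_left h1 hCstpos
    have h3 : Cst * (m / (2 * Cst)) = m / 2 := by field_simp
    rw [h3] at h2; linarith
  have hr1 : r ≤ 1 := le_trans hrm.le (le_trans (min_le_left _ _) (min_le_left _ _))
  have hrηf : r ≤ ηf := le_trans hrm.le (le_trans (min_le_left _ _) (min_le_right _ _))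
  have hrηb : r ≤ ηb := le_trans hrm.le (le_trans (min_le_right _ _) (min_le_left _ _))
  have hrηg : r < ηg := lt_of_lt_of_le hrm (le_trans (min_le_right _ _) (min_le_right _ _))
  have hΔ : ∀ t ∈ Icc (0:ℝ) T, ‖X x' t - X x t‖ ≤ r := by
    intro t ht
    rw [← dist_eq_norm]
    calc dist (X x' t) (X x t) ≤ dist x' x * Cst := grw x' hdle t ht
      _ = r := by rw [hrdef]; ring
  have hdsmall : (d:ℝ) * (ε/((d:ℝ)+1)) ≤ ε := by
    have h9 : (d:ℝ)/((d:ℝ)+1) ≤ 1 := (div_le_one (by positivity)).2 (by linarith)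
    calc (d:ℝ) * (ε/((d:ℝ)+1)) = ((d:ℝ)/((d:ℝ)+1)) * ε := by ring
      _ ≤ 1 * ε := mul_le_mul_of_nonneg_right h9 hε.le
      _ = ε := one_mul ε
  have hball : ∀ t ∈ Icc (0:ℝ) T, Metric.closedBall (X x t) r ⊆ K := by
    intro t ht z hz
    rw [hKdef, mem_closedBall_zero_iff]
    have h1 : dist z (X x t) ≤ r := Metric.mem_closedBall.1 hz
    have h2 := hMx t ht
    have h3 : ‖z‖ ≤ ‖X x t‖ + dist z (X x t) := by
      rw [dist_eq_norm]
      calc ‖z‖ = ‖X x t + (z - X x t)‖ := by ring_nf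
        _ ≤ ‖X x t‖ + ‖z - X x t‖ := norm_add_le _ _
    rw [hRdef]; linarith
  have hRf : ∀ t ∈ Icc (0:ℝ) T,
      ‖f (X x' t) t - f (X x t) t - gf (X x t) t ⬝ᵥ (X x' t - X x t)‖ ≤ ε * r := by
    intro t ht
    have hmean := (convex_closedBall (X x t) r).norm_image_sub_le_of_norm_hasFDerivWithin_le'
      (f := fun y => f y t) (f' := fun z => dotCLM (gf z t))
      (φ := dotCLM (gf (X x t) t)) (C := ε)
      (fun z _hz => (hfCLM z t).hasFDerivWithinAt)
      (fun z hz => by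
        refine le_trans (dotCLM_sub_norm_le _ _) ?_
        have hzK : z ∈ K := hball t ht hz
        have hdist := hmodf t ht z hzK (X x t) (hXK t ht)
          (le_trans (Metric.mem_closedBall.1 hz) hrηf)
        rw [dist_eq_norm] at hdist
        calc (d:ℝ) * ‖gf z t - gf (X x t) t‖ ≤ (d:ℝ) * (ε/((d:ℝ)+1)) :=
              mul_le_mul_of_nonneg_left hdist (Nat.cast_nonneg _)
          _ ≤ ε := hdsmall)
      (Metric.mem_closedBall_self hrnn)
      (Metric.mem_closedBall.2 (by rw [dist_eq_norm]; exact hΔ t ht))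
    rw [dotCLM_apply] at hmean
    calc ‖f (X x' t) t - f (X x t) t - gf (X x t) t ⬝ᵥ (X x' t - X x t)‖
        ≤ ε * ‖X x' t - X x t‖ := hmean
      _ ≤ ε * r := mul_le_mul_of_nonneg_left (hΔ t ht) hε.le
  have hRb : ∀ t ∈ Icc (0:ℝ) T,
      ‖b (X x' t) t - b (X x t) t - (Jb (X x t) t).mulVec (X x' t - X x t)‖ ≤ ε * r := by
    intro t ht
    have hmean := (convex_closedBall (X x t) r).norm_image_sub_le_of_norm_hasFDerivWithin_le'
      (f := fun y => b y t) (f' := fun z => mulCLM (fun i j => Jb z t i j))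
      (φ := mulCLM (fun i j => Jb (X x t) t i j)) (C := ε)
      (fun z _hz => (hbCLM z t).hasFDerivWithinAt)
      (fun z hz => by
        refine le_trans (mulCLM_sub_norm_le _ _) ?_
        have hzK : z ∈ K := hball t ht hz
        have hdist := hmodb t ht z hzK (X x t) (hXK t ht)
          (le_trans (Metric.mem_closedBall.1 hz) hrηb)
        rw [dist_eq_norm] at hdist
        calc (d:ℝ) * ‖(fun i j => Jb z t i j) - (fun i j => Jb (X x t) t i j)‖
            ≤ (d:ℝ) * (ε/((d:ℝ)+1)) :=
              mul_le_mul_of_nonneg_left hdist (Nat.cast_nonneg _)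
          _ ≤ ε := hdsmall)
      (Metric.mem_closedBall_self hrnn)
      (Metric.mem_closedBall.2 (by rw [dist_eq_norm]; exact hΔ t ht))
    have happ : mulCLM (fun i j => Jb (X x t) t i j) (X x' t - X x t)
        = (Jb (X x t) t).mulVec (X x' t - X x t) := mulCLM_apply _ _
    rw [happ] at hmean
    calc ‖b (X x' t) t - b (X x t) t - (Jb (X x t) t).mulVec (X x' t - X x t)‖
        ≤ ε * ‖X x' t - X x t‖ := hmean
      _ ≤ ε * r := mul_le_mul_of_nonneg_left (hΔ t ht) hε.le
  have hIb : ∀ t ∈ Set.uIoc (0:ℝ) T,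
      ‖(f (X x' t) t - f (X x t) t - gf (X x t) t ⬝ᵥ (X x' t - X x t))
        + a x t ⬝ᵥ (b (X x' t) t - b (X x t) t - (Jb (X x t) t).mulVec (X x' t - X x t))‖
      ≤ ε * r * (1 + d * A0) := by
    intro t ht
    have ht' : t ∈ Icc (0:ℝ) T := by
      rw [Set.uIoc_of_le hT.le] at ht; exact Ioc_subset_Icc_self ht
    have h1 := hRf t ht'
    have h2 : ‖a x t ⬝ᵥ (b (X x' t) t - b (X x t) t - (Jb (X x t) t).mulVec (X x' t - X x t))‖
        ≤ (d:ℝ) * A0 * (ε * r) := by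
      rw [Real.norm_eq_abs]
      refine le_trans (abs_dot_le _ _) ?_
      have h3 := hA0 t ht'
      have h4 := hRb t ht'
      have h5 : (d:ℝ) * ‖a x t‖ * ‖b (X x' t) t - b (X x t) t
          - (Jb (X x t) t).mulVec (X x' t - X x t)‖ ≤ (d:ℝ) * A0 * (ε * r) := by
        have h6 : (d:ℝ) * ‖a x t‖ ≤ (d:ℝ) * A0 :=
          mul_le_mul_of_nonneg_left h3 (Nat.cast_nonneg _)
        exact mul_le_mul h6 h4 (norm_nonneg _) (by positivity)
      exact h5
    calc ‖_ + _‖ ≤ ‖(f (X x' t) t - f (X x t) t - gf (X x t) t ⬝ᵥ (X x' t - X x t))‖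
          + ‖a x t ⬝ᵥ (b (X x' t) t - b (X x t) t - (Jb (X x t) t).mulVec (X x' t - X x t))‖ :=
        norm_add_le _ _
      _ ≤ ε * r + (d:ℝ) * A0 * (ε * r) := add_le_add h1 h2
      _ = ε * r * (1 + d * A0) := by ring
  have hInt : ‖∫ t in (0:ℝ)..T,
      ((f (X x' t) t - f (X x t) t - gf (X x t) t ⬝ᵥ (X x' t - X x t))
        + a x t ⬝ᵥ (b (X x' t) t - b (X x t) t - (Jb (X x t) t).mulVec (X x' t - X x t)))‖
      ≤ ε * r * (1 + d * A0) * T := by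
    have h := intervalIntegral.norm_integral_le_of_norm_le_const hIb
    rwa [sub_zero, abs_of_pos hT] at h
  have hRg : ‖g (X x' T) - g (X x T) - gg (X x T) ⬝ᵥ (X x' T - X x T)‖ ≤ ε * r := by
    have hdT : dist (X x' T) (X x T) < ηg := by
      rw [dist_eq_norm]
      exact lt_of_le_of_lt (hΔ T ⟨hT.le, le_rfl⟩) hrηg
    have h := hg' hdT
    rw [hLgv] at h
    calc ‖g (X x' T) - g (X x T) - gg (X x T) ⬝ᵥ (X x' T - X x T)‖
        ≤ ε * ‖X x' T - X x T‖ := h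
      _ ≤ ε * r := mul_le_mul_of_nonneg_left (hΔ T ⟨hT.le, le_rfl⟩) hε.le
  have hdot : dotCLM (a x 0) (x' - x) = a x 0 ⬝ᵥ (x' - x) := dotCLM_apply _ _
  have hgoal : ‖((∫ t in (0:ℝ)..T, f (X x' t) t) + g (X x' T))
      - ((∫ t in (0:ℝ)..T, f (X x t) t) + g (X x T)) - dotCLM (a x 0) (x' - x)‖
      ≤ c * ‖x' - x‖ := by
    rw [hdot, key x']
    have hεD : ε * D = c := div_mul_cancel₀ _ hD.ne'
    calc ‖_ + _‖ ≤ ε * r * (1 + d * A0) * T + ε * r :=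
          le_trans (norm_add_le _ _) (add_le_add hInt hRg)
      _ = ε * D * dist x' x := by rw [hrdef, hDdef]; ring
      _ = c * ‖x' - x‖ := by rw [hεD, dist_eq_norm]
  exact hgoal
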